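/- Let d = MN, let K ⊆ ℂ^d be a nonempty closed set, let c ∈ ℂ^d, and let η > 0, L > 0. Let (ρ_k)_{k∈ℕ} be a sequence of positive reals with ρ_k → ∞, and for each k let v_k ∈ K be a minimizer over K of f_k(v) = (η/L)‖v‖_{2,1} + (ρ_k/2)‖v − c‖₂², where ‖v‖_{2,1} = ∑_{n=1}^N ‖v_{(n)}‖₂ with blocks v_{(n)} = (v(n), v(n+N), …, v(n+(M−1)N)). If v_k converges to some v_∞ ∈ ℂ^d, then v_∞ ∈ K and ‖v_∞ − c‖₂ = inf_{v ∈ K} ‖v − c‖₂, i.e., v_∞ is a closest point of K to c. -/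

import Mathlib

open Filter

/-- The `n`-th antenna block `v_{(n)} ∈ ℂ^M` of a stacked vector `v ∈ ℂ^{MN}`
(index `(m, n)` corresponds to entry `n + mN` of the stacked vector). -/
noncomputable def antennaBlock (M N : ℕ) (v : EuclideanSpace ℂ (Fin M × Fin N)) (n : Fin N) :
    EuclideanSpace ℂ (Fin M) :=
  WithLp.toLp 2 (fun m => v (m, n))

/-- The mixed `ℓ_{2,1}` norm `‖v‖_{2,1} = ∑_{n=1}^N ‖v_{(n)}‖₂`. -/
noncomputable def norm21 (M N : ℕ) (v : EuclideanSpace ℂ (Fin M × Fin N)) : ℝ :=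
  ∑ n, ‖antennaBlock M N v n‖

/-- let `K ⊆ ℂ^{MN}` be nonempty and closed, `ρ_k → ∞`, and for each `k`
let `v_k` minimize `f_k(v) = (η/L)‖v‖_{2,1} + (ρ_k/2)‖v − c‖₂²` over `K`.  If
`v_k → v_∞`, then `v_∞ ∈ K` and `v_∞` is a closest point of `K` to `c`. -/
theorem penalized_minimizers_tendto_projection (M N : ℕ)
    (K : Set (EuclideanSpace ℂ (Fin M × Fin N))) (hKne : K.Nonempty) (hKcl : IsClosed K)
    (c : EuclideanSpace ℂ (Fin M × Fin N)) (η L : ℝ) (hη : 0 < η) (hL : 0 < L)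
    (ρ : ℕ → ℝ) (hρpos : ∀ k, 0 < ρ k) (hρ : Tendsto ρ atTop atTop)
    (v : ℕ → EuclideanSpace ℂ (Fin M × Fin N)) (hvK : ∀ k, v k ∈ K)
    (hvmin : ∀ k, ∀ u ∈ K,
      η / L * norm21 M N (v k) + ρ k / 2 * ‖v k - c‖ ^ 2
        ≤ η / L * norm21 M N u + ρ k / 2 * ‖u - c‖ ^ 2)
    (vinf : EuclideanSpace ℂ (Fin M × Fin N))
    (hconv : Tendsto v atTop (nhds vinf)) :
    vinf ∈ K ∧ ‖vinf - c‖ = ⨅ u : K, ‖(u : EuclideanSpace ℂ (Fin M × Fin N)) - c‖ := by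
  have hmem : vinf ∈ K := hKcl.mem_of_tendsto hconv (Eventually.of_forall hvK)
  refine ⟨hmem, ?_⟩
  have hle : ∀ u ∈ K, ‖vinf - c‖ ≤ ‖u - c‖ := by
    intro u hu
    have hn21 : ∀ w, 0 ≤ norm21 M N w := fun w =>
      Finset.sum_nonneg fun n _ => norm_nonneg _
    have key : ∀ k, ‖v k - c‖ ^ 2 ≤ ‖u - c‖ ^ 2 + 2 * (η / L * norm21 M N u) / ρ k := by
      intro k
      have h := hvmin k u hu
      have h1 : 0 ≤ η / L * norm21 M N (v k) :=
        mul_nonneg (le_of_lt (div_pos hη hL)) (hn21 _)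
      have hk := hρpos k
      rw [← sub_le_iff_le_add', le_div_iff₀ hk]
      nlinarith [hn21 u]
    have hlim1 : Tendsto (fun k => ‖v k - c‖ ^ 2) atTop (nhds (‖vinf - c‖ ^ 2)) := by
      have : Tendsto (fun k => v k - c) atTop (nhds (vinf - c)) :=
        hconv.sub tendsto_const_nhds
      exact (this.norm.pow 2)
    have hlim2 : Tendsto (fun k => ‖u - c‖ ^ 2 + 2 * (η / L * norm21 M N u) / ρ k)
        atTop (nhds (‖u - c‖ ^ 2 + 0)) := by
      exact tendsto_const_nhds.add (Tendsto.div_atTop tendsto_const_nhds hρ)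
    rw [add_zero] at hlim2
    have hsq : ‖vinf - c‖ ^ 2 ≤ ‖u - c‖ ^ 2 :=
      le_of_tendsto_of_tendsto' hlim1 hlim2 key
    nlinarith [norm_nonneg (vinf - c), norm_nonneg (u - c)]
  have hne : Nonempty K := hKne.to_subtype
  refine le_antisymm (le_ciInf fun u => hle u u.2) ?_
  exact ciInf_le ⟨0, fun x ⟨u, hu⟩ => hu ▸ norm_nonneg _⟩ (⟨vinf, hmem⟩ : K)
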